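/- Let (G, e) be a marked connected graph with τ(G − e) > 0 and τ(G/e) > 0, and let (G', e') be obtained by replacing e with a path of length k+1 and marking one new edge e'. Then (τ(G'−e'), τ(G'/e')) = (τ(G−e), τ(G/e)) · [[1,k],[0,1]], i.e. τ(G'−e') = τ(G−e) and τ(G'/e') = k·τ(G−e) + τ(G/e). -/

import Mathlib

set_option linter.unusedSectionVars false
set_option linter.unnecessarySeqFocus false
set_option maxHeartbeats 1000000


/-- A finite multigraph without loops: edges are oriented pairs of distinct vertices;
parallel edges are allowed since `E` is an arbitrary type. -/
structure Multigraph (V E : Type) where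
  fst : E → V
  snd : E → V
  no_loop : ∀ e, fst e ≠ snd e

namespace Multigraph

variable {V E : Type}

/-- The simple graph on `V` whose edges are the (unordered) endpoint pairs of the
edges in the set `T`. -/
def simpleOf (M : Multigraph V E) (T : Set E) : SimpleGraph V :=
  SimpleGraph.fromEdgeSet {s | ∃ e ∈ T, s = s(M.fst e, M.snd e)}

/-- `T` is a spanning tree of the multigraph `M`: it connects all the vertices and
has exactly `|V| - 1` edges. -/
def IsSpanningTree (M : Multigraph V E) (T : Set E) : Prop :=
  (M.simpleOf T).Connected ∧ T.ncard = Nat.card V - 1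

/-- The number of spanning trees of the multigraph `M`. -/
noncomputable def tau (M : Multigraph V E) : ℕ :=
  Nat.card {T : Set E // M.IsSpanningTree T}

/-- Deletion of the edge `e`. -/
def delete (M : Multigraph V E) (e : E) : Multigraph V {e' : E // e' ≠ e} where
  fst e' := M.fst e'.1
  snd e' := M.snd e'.1
  no_loop e' := M.no_loop e'.1

open Classical in
/-- The map sending `snd e` to `fst e` and fixing all other vertices. -/
noncomputable def contractMap (M : Multigraph V E) (e : E) (v : V) :
    {w : V // w ≠ M.snd e} :=
  if h : v = M.snd e then ⟨M.fst e, M.no_loop e⟩ else ⟨v, h⟩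

/-- Contraction of the edge `e`: the endpoints of `e` are identified, and the
resulting loops (including `e` itself) are removed. -/
noncomputable def contract (M : Multigraph V E) (e : E) :
    Multigraph {w : V // w ≠ M.snd e}
      {e' : E // e' ≠ e ∧ M.contractMap e (M.fst e') ≠ M.contractMap e (M.snd e')} where
  fst e' := M.contractMap e (M.fst e'.1)
  snd e' := M.contractMap e (M.snd e'.1)
  no_loop e' := e'.2.2

/-- The multigraph is simple: distinct edges have distinct endpoint pairs. -/
def Simple (M : Multigraph V E) : Prop :=
  ∀ e₁ e₂ : E, s(M.fst e₁, M.snd e₁) = s(M.fst e₂, M.snd e₂) → e₁ = e₂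

end Multigraph

namespace Multigraph

variable {V E : Type}

/-- The subdivision operation `f^k`: replace the edge `e` by a path with `k+1` edges
through `k` new internal vertices. The new path edges are indexed by `Fin (k+1)`. -/
def subdivide (M : Multigraph V E) (e : E) (k : ℕ) :
    Multigraph (V ⊕ Fin k) ({e' : E // e' ≠ e} ⊕ Fin (k + 1)) where
  fst x :=
    match x with
    | .inl e' => .inl (M.fst e'.1)
    | .inr i =>
        if h : (i : ℕ) = 0 then .inl (M.fst e)
        else .inr ⟨(i : ℕ) - 1, by have := i.isLt; omega⟩
  snd x :=
    match x with
    | .inl e' => .inl (M.snd e'.1)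
    | .inr i =>
        if h : (i : ℕ) = k then .inl (M.snd e)
        else .inr ⟨(i : ℕ), by have := i.isLt; omega⟩
  no_loop := by
    rintro (e' | i)
    · simpa using M.no_loop e'.1
    · dsimp only
      split_ifs with h1 h2 <;> simp_all [M.no_loop e]
      omega

/-- The parallel-edge operation `g^k`: replace the edge `e` by `k+1` parallel copies,
indexed by `Fin (k+1)`. -/
def addParallel (M : Multigraph V E) (e : E) (k : ℕ) :
    Multigraph V ({e' : E // e' ≠ e} ⊕ Fin (k + 1)) where
  fst x := match x with | .inl e' => M.fst e'.1 | .inr _ => M.fst e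
  snd x := match x with | .inl e' => M.snd e'.1 | .inr _ => M.snd e
  no_loop := by rintro (e' | i); exacts [M.no_loop e'.1, M.no_loop e]

end Multigraph

namespace Multigraph

variable {V E : Type}

-- ### layer 1
open Relation

def rel (M : Multigraph V E) (S : Set E) (x y : V) : Prop :=
  ∃ f ∈ S, (M.fst f = x ∧ M.snd f = y) ∨ (M.fst f = y ∧ M.snd f = x)

theorem rel_symm (M : Multigraph V E) (S : Set E) : Symmetric (M.rel S) :=
  fun _ _ ⟨f, hf, h⟩ => ⟨f, hf, h.symm⟩

theorem adj_iff (M : Multigraph V E) (S : Set E) {x y : V} :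
    (M.simpleOf S).Adj x y ↔ M.rel S x y := by
  simp only [simpleOf, SimpleGraph.fromEdgeSet_adj, Set.mem_setOf_eq]
  constructor
  · rintro ⟨⟨f, hf, hs⟩, -⟩
    rw [Sym2.eq_iff] at hs
    exact ⟨f, hf, by tauto⟩
  · rintro ⟨f, hf, h⟩
    refine ⟨⟨f, hf, by rw [Sym2.eq_iff]; tauto⟩, ?_⟩
    rcases h with ⟨h1, h2⟩ | ⟨h1, h2⟩ <;> · subst h1; subst h2
                                            first
                                              | exact M.no_loop f
                                              | exact (M.no_loop f).symm

theorem connected_iff' (M : Multigraph V E) (S : Set E) :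
    (M.simpleOf S).Connected ↔ Nonempty V ∧ ∀ x y : V, ReflTransGen (M.rel S) x y := by
  rw [SimpleGraph.connected_iff]
  constructor
  · rintro ⟨h, hne⟩
    refine ⟨hne, fun x y => ?_⟩
    exact ReflTransGen.mono (fun a b hab => (M.adj_iff S).1 hab) x y
      (((M.simpleOf S).reachable_iff_reflTransGen x y).1 (h x y))
  · rintro ⟨hne, h⟩
    refine ⟨fun x y => ((M.simpleOf S).reachable_iff_reflTransGen x y).2
      (ReflTransGen.mono (fun a b hab => (M.adj_iff S).2 hab) x y (h x y)), hne⟩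

theorem rtg_map {α β : Type*} {r : α → α → Prop} {s : β → β → Prop} (f : α → β)
    (h : ∀ a b, r a b → ReflTransGen s (f a) (f b)) {a b : α}
    (hab : ReflTransGen r a b) : ReflTransGen s (f a) (f b) := by
  induction hab with
  | refl => exact .refl
  | tail _ hbc ih => exact ih.trans (h _ _ hbc)

theorem cross {M : Multigraph V E} {S : Set E} {B : Set V} {u v : V}
    (h : ReflTransGen (M.rel S) u v) (hu : u ∉ B) (hv : v ∈ B) :
    ∃ f ∈ S, (M.fst f ∈ B ∧ M.snd f ∉ B) ∨ (M.fst f ∉ B ∧ M.snd f ∈ B) := by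
  induction h with
  | refl => exact absurd hv hu
  | @tail m w hum hmw ih =>
    by_cases hm : m ∈ B
    · exact ih hm
    · obtain ⟨f, hf, hor⟩ := hmw
      refine ⟨f, hf, ?_⟩
      rcases hor with ⟨h1, h2⟩ | ⟨h1, h2⟩
      · exact Or.inr ⟨h1 ▸ hm, h2 ▸ hv⟩
      · exact Or.inl ⟨h1 ▸ hv, h2 ▸ hm⟩

theorem card_ne {α : Type} [Finite α] (a : α) :
    Nat.card {x : α // x ≠ a} = Nat.card α - 1 := by
  classical
  have hc := Nat.card_congr (Equiv.sumCompl (· = a)).symm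
  rw [Nat.card_sum] at hc
  have h1 : Nat.card {x : α // x = a} = 1 := by
    have : Unique {x : α // x = a} := ⟨⟨⟨a, rfl⟩⟩, by rintro ⟨x, rfl⟩; rfl⟩
    exact Nat.card_unique
  have h2 : Nat.card α = Nat.card {x : α // x = a} + Nat.card {x : α // x ≠ a} := hc
  omega

theorem ncard_sum {A B : Type} [Finite A] [Finite B] (U : Set (A ⊕ B)) :
    U.ncard = {a | Sum.inl a ∈ U}.ncard + {b | Sum.inr b ∈ U}.ncard := by
  have hU : U = Sum.inl '' {a | Sum.inl a ∈ U} ∪ Sum.inr '' {b | Sum.inr b ∈ U} := by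
    ext (a | b) <;> simp
  conv_lhs => rw [hU]
  rw [Set.ncard_union_eq ?_ (Set.toFinite _) (Set.toFinite _),
    Set.ncard_image_of_injective _ Sum.inl_injective,
    Set.ncard_image_of_injective _ Sum.inr_injective]
  rw [Set.disjoint_left]
  rintro x ⟨a, -, rfl⟩ ⟨b, -, h⟩
  exact Sum.inl_ne_inr h.symm

theorem ncard_val_image {γ : Type} {p : γ → Prop} (S : Set {x // p x}) :
    (Subtype.val '' S).ncard = S.ncard :=
  Set.ncard_image_of_injective _ Subtype.val_injective

theorem rel_delete (N : Multigraph V E) (f : E) (S : Set {g : E // g ≠ f}) :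
    (N.delete f).rel S = N.rel (Subtype.val '' S) := by
  ext x y
  constructor
  · rintro ⟨g, hg, h⟩; exact ⟨g.1, ⟨g, hg, rfl⟩, h⟩
  · rintro ⟨g, ⟨g', hg', rfl⟩, h⟩; exact ⟨g', hg', h⟩

theorem contractMap_eq_self (N : Multigraph V E) (f : E) {v : V} (h : v ≠ N.snd f) :
    N.contractMap f v = ⟨v, h⟩ := dif_neg h

theorem contractMap_snd (N : Multigraph V E) (f : E) :
    N.contractMap f (N.snd f) = ⟨N.fst f, N.no_loop f⟩ := dif_pos rfl

theorem contractMap_fst (N : Multigraph V E) (f : E) :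
    N.contractMap f (N.fst f) = ⟨N.fst f, N.no_loop f⟩ := dif_neg (N.no_loop f)

theorem contractMap_eq_analysis (N : Multigraph V E) (f : E) {u v : V}
    (hpar : N.contractMap f u = N.contractMap f v) (huv : u ≠ v) :
    (u = N.snd f ∧ v = N.fst f) ∨ (u = N.fst f ∧ v = N.snd f) := by
  unfold contractMap at hpar
  split_ifs at hpar with h1 h2 h2
  · exact absurd (h1.trans h2.symm) huv
  · exact Or.inl ⟨h1, by simpa using congrArg Subtype.val hpar.symm⟩
  · exact Or.inr ⟨by simpa using congrArg Subtype.val hpar, h2⟩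
  · exact absurd (by simpa using congrArg Subtype.val hpar) huv

theorem rtg_symm {α : Type*} {r : α → α → Prop} (hr : Symmetric r) {a b : α}
    (h : ReflTransGen r a b) : ReflTransGen r b a := by
  induction h with
  | refl => exact .refl
  | tail _ hbc ih => exact ReflTransGen.head (hr hbc) ih

/-- Reaching the contracted image. -/
theorem step_to_contractMap (N : Multigraph V E) (f : E)
    (U : Set E) (hf : f ∈ U) (v : V) :
    ReflTransGen (N.rel U) v (N.contractMap f v).1 := by
  by_cases h : v = N.snd f
  · subst h
    rw [N.contractMap_snd f]
    exact ReflTransGen.single ⟨f, hf, Or.inr ⟨rfl, rfl⟩⟩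
  · rw [N.contractMap_eq_self f h]

theorem contract_conn_iff (N : Multigraph V E) (f : E)
    (S : Set {g : E // g ≠ f ∧ N.contractMap f (N.fst g) ≠ N.contractMap f (N.snd g)}) :
    (∀ x y, ReflTransGen ((N.contract f).rel S) x y) ↔
    (∀ x y : V, ReflTransGen (N.rel (Subtype.val '' S ∪ {f})) x y) := by
  have hfU : f ∈ Subtype.val '' S ∪ {f} := Or.inr rfl
  constructor
  · intro h x y
    have h1 := h (N.contractMap f x) (N.contractMap f y)
    have h2 : ReflTransGen (N.rel (Subtype.val '' S ∪ {f}))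
        (N.contractMap f x).1 (N.contractMap f y).1 := by
      refine rtg_map Subtype.val ?_ h1
      rintro a b ⟨g, hg, hor⟩
      have key : ∀ u v : V, N.fst g.1 = u → N.snd g.1 = v →
          ReflTransGen (N.rel (Subtype.val '' S ∪ {f}))
            (N.contractMap f u).1 (N.contractMap f v).1 := by
        rintro u v rfl rfl
        refine (rtg_symm (N.rel_symm _) (N.step_to_contractMap f _ hfU (N.fst g.1))).trans
          (ReflTransGen.trans (ReflTransGen.single ⟨g.1, Or.inl ⟨g, hg, rfl⟩, Or.inl ⟨rfl, rfl⟩⟩)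
            (N.step_to_contractMap f _ hfU (N.snd g.1)))
      rcases hor with ⟨h1', h2'⟩ | ⟨h1', h2'⟩
      · exact h1' ▸ h2' ▸ key _ _ rfl rfl
      · exact rtg_symm (N.rel_symm _) (h1' ▸ h2' ▸ key _ _ rfl rfl)
    exact ((N.step_to_contractMap f _ hfU x).trans h2).trans
      (rtg_symm (N.rel_symm _) (N.step_to_contractMap f _ hfU y))
  · intro h x y
    have hx : N.contractMap f x.1 = x := by
      rw [N.contractMap_eq_self f x.2]
    have hy : N.contractMap f y.1 = y := by
      rw [N.contractMap_eq_self f y.2]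
    rw [← hx, ← hy]
    refine rtg_map (N.contractMap f) ?_ (h x.1 y.1)
    rintro a b ⟨g, hg, hor⟩
    rcases hg with ⟨g', hg', rfl⟩ | hg
    · rcases hor with ⟨h1, h2⟩ | ⟨h1, h2⟩
      · exact ReflTransGen.single ⟨g', hg', Or.inl ⟨by rw [← h1]; rfl, by rw [← h2]; rfl⟩⟩
      · exact ReflTransGen.single ⟨g', hg', Or.inr ⟨by rw [← h1]; rfl, by rw [← h2]; rfl⟩⟩
    · rcases hg
      have hc : N.contractMap f (N.fst f) = N.contractMap f (N.snd f) := by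
        rw [N.contractMap_fst, N.contractMap_snd]
      rcases hor with ⟨h1, h2⟩ | ⟨h1, h2⟩
      · rw [← h1, ← h2, hc]
      · rw [← h1, ← h2, hc]

/-- A connected multigraph on `n` vertices needs at least `n - 1` edges. -/
theorem card_le_of_conn :
    ∀ (n : ℕ) (W F : Type) [Finite W] [Finite F] (N : Multigraph W F) (U : Set F),
      Nat.card W = n → (∀ x y : W, ReflTransGen (N.rel U) x y) →
      Nat.card W ≤ U.ncard + 1 := by
  intro n
  induction n using Nat.strong_induction_on with
  | _ n ih =>
    intro W F _ _ N U hn h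
    by_cases hW : Nat.card W ≤ 1
    · omega
    · have : Nontrivial W := Finite.one_lt_card_iff_nontrivial.mp (by omega)
      obtain ⟨x, y, hxy⟩ := this
      -- extract an edge
      obtain ⟨f, hfU⟩ : ∃ f, f ∈ U := by
        rcases (h x y).cases_head with heq | ⟨c, ⟨f, hf, -⟩, -⟩
        · exact absurd heq hxy
        · exact ⟨f, hf⟩
      set W' := {w : W // w ≠ N.snd f} with hW'
      set U' : Set {g : F // g ≠ f ∧ N.contractMap f (N.fst g) ≠ N.contractMap f (N.snd g)} :=
        {g | g.1 ∈ U} with hU'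
      have hconn' : ∀ x' y' : W', ReflTransGen ((N.contract f).rel U') x' y' := by
        intro x' y'
        have hx : N.contractMap f x'.1 = x' := N.contractMap_eq_self f x'.2
        have hy : N.contractMap f y'.1 = y' := N.contractMap_eq_self f y'.2
        rw [← hx, ← hy]
        refine rtg_map (N.contractMap f) ?_ (h x'.1 y'.1)
        rintro a b ⟨g, hg, hor⟩
        by_cases hpar : N.contractMap f (N.fst g) = N.contractMap f (N.snd g)
        · rcases hor with ⟨h1, h2⟩ | ⟨h1, h2⟩
          · rw [← h1, ← h2, hpar]
          · rw [← h1, ← h2, hpar]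
        · have hgf : g ≠ f := by
            rintro rfl
            exact hpar (by rw [N.contractMap_fst, N.contractMap_snd])
          refine ReflTransGen.single ⟨⟨g, hgf, hpar⟩, hg, ?_⟩
          rcases hor with ⟨h1, h2⟩ | ⟨h1, h2⟩
          · exact Or.inl ⟨by rw [← h1]; rfl, by rw [← h2]; rfl⟩
          · exact Or.inr ⟨by rw [← h1]; rfl, by rw [← h2]; rfl⟩
      have hcard : Nat.card W' = Nat.card W - 1 := card_ne _
      have hUcard : U'.ncard ≤ U.ncard - 1 := by
        have h1 : (Subtype.val '' U').ncard = U'.ncard := ncard_val_image U'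
        have h2 : Subtype.val '' U' ⊆ U \ {f} := by
          rintro g ⟨g', hg', rfl⟩
          exact ⟨hg', g'.2.1⟩
        calc U'.ncard = (Subtype.val '' U').ncard := h1.symm
          _ ≤ (U \ {f}).ncard := Set.ncard_le_ncard h2 (Set.toFinite _)
          _ = U.ncard - 1 := by rw [Set.ncard_diff_singleton_of_mem hfU]
      have hUpos : 0 < U.ncard := by
        rw [Set.ncard_pos (Set.toFinite _)]
        exact ⟨f, hfU⟩
      have := ih (Nat.card W - 1) (by omega) W' _ (N.contract f) U' (by omega) hconn'
      omega


section Subdiv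

variable (M : Multigraph V E) (e : E) (k : ℕ)

theorem sub_fst_inl (g : {e' : E // e' ≠ e}) :
    (M.subdivide e k).fst (.inl g) = .inl (M.fst g.1) := rfl

theorem sub_snd_inl (g : {e' : E // e' ≠ e}) :
    (M.subdivide e k).snd (.inl g) = .inl (M.snd g.1) := rfl

theorem sub_fst_inr (j : Fin (k+1)) :
    (M.subdivide e k).fst (.inr j) =
      if h : (j : ℕ) = 0 then .inl (M.fst e)
      else .inr ⟨(j : ℕ) - 1, by have := j.isLt; omega⟩ := rfl

theorem sub_snd_inr (j : Fin (k+1)) :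
    (M.subdivide e k).snd (.inr j) =
      if h : (j : ℕ) = k then .inl (M.snd e)
      else .inr ⟨(j : ℕ), by have := j.isLt; omega⟩ := rfl

variable {M e k}

theorem walk_down {S' : Set ({e' : E // e' ≠ e} ⊕ Fin (k+1))} :
    ∀ (m : ℕ) (hm : m < k), (∀ t : Fin (k+1), (t : ℕ) ≤ m → Sum.inr t ∈ S') →
    ReflTransGen ((M.subdivide e k).rel S') (.inr ⟨m, hm⟩) (.inl (M.fst e)) := by
  intro m
  induction m with
  | zero =>
    intro hm hS
    refine ReflTransGen.single ⟨.inr ⟨0, by omega⟩, hS _ (by simp), Or.inr ⟨?_, ?_⟩⟩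
    · rw [sub_fst_inr]; simp
    · rw [sub_snd_inr]; rw [dif_neg (by simp; omega)]
  | succ m ih =>
    intro hm hS
    refine ReflTransGen.head ⟨.inr ⟨m+1, by omega⟩, hS _ (by simp), Or.inr ⟨?_, ?_⟩⟩
      (ih (by omega) (fun t ht => hS t (by omega)))
    · rw [sub_fst_inr]; rw [dif_neg (by simp)]; simp
    · rw [sub_snd_inr]; rw [dif_neg (by simp; omega)]

theorem walk_up {S' : Set ({e' : E // e' ≠ e} ⊕ Fin (k+1))} :
    ∀ (d m : ℕ) (hm : m < k), k - m ≤ d →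
    (∀ t : Fin (k+1), m < (t : ℕ) → Sum.inr t ∈ S') →
    ReflTransGen ((M.subdivide e k).rel S') (.inr ⟨m, hm⟩) (.inl (M.snd e)) := by
  intro d
  induction d with
  | zero => intro m hm hd; omega
  | succ d ih =>
    intro m hm hd hS
    by_cases hmk : m + 1 = k
    · refine ReflTransGen.single ⟨.inr ⟨m+1, by omega⟩, hS _ (by simp), Or.inl ⟨?_, ?_⟩⟩
      · rw [sub_fst_inr]; rw [dif_neg (by simp)]; simp
      · rw [sub_snd_inr]; rw [dif_pos (by simpa using hmk)]
    · refine ReflTransGen.head ⟨.inr ⟨m+1, by omega⟩, hS _ (by simp), Or.inl ⟨?_, ?_⟩⟩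
        (ih (m+1) (by omega) (by omega) (fun t ht => hS t (by omega)))
      · rw [sub_fst_inr]; rw [dif_neg (by simp)]; simp
      · rw [sub_snd_inr]; rw [dif_neg (by simp; omega)]

theorem walk_full {S' : Set ({e' : E // e' ≠ e} ⊕ Fin (k+1))}
    (hS : ∀ t : Fin (k+1), Sum.inr t ∈ S') :
    ReflTransGen ((M.subdivide e k).rel S') (.inl (M.fst e)) (.inl (M.snd e)) := by
  by_cases hk : k = 0
  · subst hk
    refine ReflTransGen.single ⟨.inr ⟨0, by omega⟩, hS _, Or.inl ⟨?_, ?_⟩⟩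
    · rw [sub_fst_inr]; simp
    · rw [sub_snd_inr]; simp
  · refine ReflTransGen.head ⟨.inr ⟨0, by omega⟩, hS _, Or.inl ⟨?_, ?_⟩⟩
      (walk_up k 0 (by omega) (by omega) (fun t ht => hS t))
    · rw [sub_fst_inr]; simp
    · rw [sub_snd_inr]; rw [dif_neg (by simp; omega)]

/-- Forward connectivity transfer for the subdivision. -/
theorem subdiv_conn_fwd (S' : Set ({e' : E // e' ≠ e} ⊕ Fin (k+1))) (TT : Set E)
    (j₀ : Fin (k+1))
    (hT : ∀ (e' : E) (h : e' ≠ e), e' ∈ TT → Sum.inl ⟨e', h⟩ ∈ S')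
    (hj : ∀ j : Fin (k+1), j ≠ j₀ → Sum.inr j ∈ S')
    (hseam : e ∈ TT → Sum.inr j₀ ∈ S')
    (hconn : ∀ x y : V, ReflTransGen (M.rel TT) x y) :
    ∀ X Y : V ⊕ Fin k, ReflTransGen ((M.subdivide e k).rel S') X Y := by
  have reach_inl : ∀ X : V ⊕ Fin k, ∃ v : V,
      ReflTransGen ((M.subdivide e k).rel S') X (.inl v) := by
    rintro (v | m)
    · exact ⟨v, .refl⟩
    · by_cases hm : (m : ℕ) < (j₀ : ℕ)
      · refine ⟨M.fst e, ?_⟩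
        have : (.inr m : V ⊕ Fin k) = .inr ⟨(m : ℕ), m.isLt⟩ := by simp
        rw [this]
        exact walk_down (m : ℕ) m.isLt (fun t ht => hj t (by intro h; subst h; omega))
      · refine ⟨M.snd e, ?_⟩
        have : (.inr m : V ⊕ Fin k) = .inr ⟨(m : ℕ), m.isLt⟩ := by simp
        rw [this]
        exact walk_up k (m : ℕ) m.isLt (by omega)
          (fun t ht => hj t (by intro h; subst h; omega))
  have inl_to_inl : ∀ v w : V,
      ReflTransGen ((M.subdivide e k).rel S') (.inl v) (.inl w) := by
    intro v w
    refine rtg_map Sum.inl ?_ (hconn v w)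
    rintro a b ⟨f, hf, hor⟩
    by_cases hfe : f = e
    · rw [hfe] at hor
      have hall : ∀ t : Fin (k+1), Sum.inr t ∈ S' := by
        intro t
        by_cases ht : t = j₀
        · exact ht ▸ hseam (hfe ▸ hf)
        · exact hj t ht
      rcases hor with ⟨h1, h2⟩ | ⟨h1, h2⟩
      · rw [← h1, ← h2]; exact walk_full hall
      · rw [← h1, ← h2]; exact rtg_symm ((M.subdivide e k).rel_symm S') (walk_full hall)
    · refine ReflTransGen.single ⟨.inl ⟨f, hfe⟩, hT f hfe hf, ?_⟩
      rcases hor with ⟨h1, h2⟩ | ⟨h1, h2⟩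
      · exact Or.inl ⟨by rw [sub_fst_inl, h1], by rw [sub_snd_inl, h2]⟩
      · exact Or.inr ⟨by rw [sub_fst_inl, h1], by rw [sub_snd_inl, h2]⟩
  intro X Y
  obtain ⟨vX, hX⟩ := reach_inl X
  obtain ⟨vY, hY⟩ := reach_inl Y
  exact (hX.trans (inl_to_inl vX vY)).trans (rtg_symm ((M.subdivide e k).rel_symm S') hY)

/-- Backward connectivity transfer for the subdivision. -/
theorem subdiv_conn_back (S' : Set ({e' : E // e' ≠ e} ⊕ Fin (k+1))) (TT : Set E)
    (j₀ : Fin (k+1))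
    (hT : ∀ (g : {e' : E // e' ≠ e}), Sum.inl g ∈ S' → g.1 ∈ TT)
    (hseam : Sum.inr j₀ ∈ S' → e ∈ TT)
    (hconn : ∀ X Y : V ⊕ Fin k, ReflTransGen ((M.subdivide e k).rel S') X Y) :
    ∀ x y : V, ReflTransGen (M.rel TT) x y := by
  classical
  set c : V ⊕ Fin k → V :=
    Sum.elim id (fun m => if (m : ℕ) < (j₀ : ℕ) then M.fst e else M.snd e) with hc
  have hcf : ∀ j : Fin (k+1), c ((M.subdivide e k).fst (.inr j)) =
      if (j : ℕ) ≤ (j₀ : ℕ) then M.fst e else M.snd e := by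
    intro j
    rw [sub_fst_inr]
    split_ifs with h0 h1 h2
    · rfl
    · omega
    · simp only [hc, Sum.elim_inr]
      rw [if_pos (by omega)]
    · simp only [hc, Sum.elim_inr]
      rw [if_neg (by omega)]
  have hcs : ∀ j : Fin (k+1), c ((M.subdivide e k).snd (.inr j)) =
      if (j : ℕ) < (j₀ : ℕ) then M.fst e else M.snd e := by
    intro j
    rw [sub_snd_inr]
    split_ifs with h0 h1 h2
    · have := j₀.isLt
      omega
    · rfl
    · simp only [hc, Sum.elim_inr]
      rw [if_pos (by omega)]
    · simp only [hc, Sum.elim_inr]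
      rw [if_neg (by omega)]
  intro x y
  have := hconn (.inl x) (.inl y)
  have hmap : ∀ X Y, (M.subdivide e k).rel S' X Y → ReflTransGen (M.rel TT) (c X) (c Y) := by
    rintro X Y ⟨f, hf, hor⟩
    rcases f with g | j
    · refine ReflTransGen.single ⟨g.1, hT g hf, ?_⟩
      rcases hor with ⟨h1, h2⟩ | ⟨h1, h2⟩
      · rw [← h1, ← h2, sub_fst_inl, sub_snd_inl]; exact Or.inl ⟨rfl, rfl⟩
      · rw [← h1, ← h2, sub_fst_inl, sub_snd_inl]; exact Or.inr ⟨rfl, rfl⟩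
    · have key : ReflTransGen (M.rel TT)
          (c ((M.subdivide e k).fst (.inr j))) (c ((M.subdivide e k).snd (.inr j))) := by
        rw [hcf j, hcs j]
        by_cases hj : j = j₀
        · subst hj
          rw [if_pos (le_refl _), if_neg (by omega)]
          exact ReflTransGen.single ⟨e, hseam hf, Or.inl ⟨rfl, rfl⟩⟩
        · have : (j : ℕ) ≠ (j₀ : ℕ) := fun h => hj (Fin.ext h)
          by_cases h1 : (j : ℕ) < (j₀ : ℕ)
          · rw [if_pos (by omega), if_pos h1]
          · rw [if_neg (by omega), if_neg h1]
      rcases hor with ⟨h1, h2⟩ | ⟨h1, h2⟩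
      · rw [← h1, ← h2]; exact key
      · rw [← h1, ← h2]; exact rtg_symm (M.rel_symm TT) key
  have := rtg_map c hmap this
  simpa [hc] using this

/-- Two missing path edges disconnect the subdivision. -/
theorem two_missing {S' : Set ({e' : E // e' ≠ e} ⊕ Fin (k+1))} {a b : Fin (k+1)}
    (hab : (a : ℕ) < (b : ℕ)) (ha : Sum.inr a ∉ S') (hb : Sum.inr b ∉ S')
    (hconn : ∀ X Y : V ⊕ Fin k, ReflTransGen ((M.subdivide e k).rel S') X Y) : False := by
  set B : Set (V ⊕ Fin k) :=
    {X | Sum.elim (fun _ => False) (fun m : Fin k => (a : ℕ) ≤ (m : ℕ) ∧ (m : ℕ) < (b : ℕ)) X} with hB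
  have hbk : (b : ℕ) ≤ k := by have := b.isLt; omega
  have hmem : (Sum.inr ⟨(a : ℕ), by omega⟩ : V ⊕ Fin k) ∈ B := by
    simp [hB]; omega
  have hnot : (Sum.inl (M.fst e) : V ⊕ Fin k) ∉ B := by simp [hB]
  obtain ⟨f, hf, hor⟩ := cross (hconn (.inl (M.fst e)) (.inr ⟨(a : ℕ), by omega⟩)) hnot hmem
  rcases f with g | j
  · rw [sub_fst_inl, sub_snd_inl] at hor
    simp [hB] at hor
  · have hja : j ≠ a := fun h => ha (h ▸ hf)
    have hjb : j ≠ b := fun h => hb (h ▸ hf)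
    have hja' : (j : ℕ) ≠ (a : ℕ) := fun h => hja (Fin.ext h)
    have hjb' : (j : ℕ) ≠ (b : ℕ) := fun h => hjb (Fin.ext h)
    have hf1 : ((M.subdivide e k).fst (.inr j) ∈ B) ↔
        ((j : ℕ) ≠ 0 ∧ (a : ℕ) ≤ (j : ℕ) - 1 ∧ (j : ℕ) - 1 < (b : ℕ)) := by
      rw [sub_fst_inr]
      split_ifs with h0
      · simp [hB, h0]
      · simp [hB, h0]
    have hf2 : ((M.subdivide e k).snd (.inr j) ∈ B) ↔
        ((j : ℕ) ≠ k ∧ (a : ℕ) ≤ (j : ℕ) ∧ (j : ℕ) < (b : ℕ)) := by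
      rw [sub_snd_inr]
      split_ifs with h0
      · simp [hB, h0]
      · simp [hB, h0]
    have hjk : (j : ℕ) ≤ k := by have := j.isLt; omega
    rcases hor with ⟨h1, h2⟩ | ⟨h1, h2⟩
    · rw [hf1] at h1; rw [hf2] at h2; omega
    · rw [hf1] at h1; rw [hf2] at h2; omega

end Subdiv

section Counting

variable {k : ℕ}

theorem ncard_ne_fin (i : Fin (k+1)) : {j : Fin (k+1) | j ≠ i}.ncard = k := by
  rw [← Nat.card_coe_set_eq]
  have h : Nat.card {j : Fin (k+1) // j ≠ i} = k := by
    rw [card_ne]; simp [Nat.card_eq_fintype_card]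
  exact h

theorem ncard_ne_fin2 (i j₀ : Fin (k+1)) (hij : j₀ ≠ i) :
    {j : Fin (k+1) | j ≠ i ∧ j ≠ j₀}.ncard = k - 1 := by
  rw [← Nat.card_coe_set_eq]
  have e1 : {j : Fin (k+1) // j ≠ i ∧ j ≠ j₀} ≃
      {x : {j : Fin (k+1) // j ≠ i} // x ≠ ⟨j₀, hij⟩} :=
    { toFun := fun j => ⟨⟨j.1, j.2.1⟩, fun h => j.2.2 (congrArg Subtype.val h)⟩
      invFun := fun x => ⟨x.1.1, x.1.2, fun h => x.2 (Subtype.ext h)⟩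
      left_inv := fun j => rfl
      right_inv := fun x => rfl }
  have h : Nat.card {j : Fin (k+1) // j ≠ i ∧ j ≠ j₀} = k - 1 := by
    rw [Nat.card_congr e1, card_ne]
    rw [card_ne]
    simp [Nat.card_eq_fintype_card]
  exact h

end Counting

set_option linter.unusedSectionVars false

section Claim1

variable [Finite V] [Finite E] {M : Multigraph V E} {e : E} {k : ℕ} {i : Fin (k+1)}

theorem card_V_ge (M : Multigraph V E) (e : E) : 2 ≤ Nat.card V := by
  have : Nontrivial V := ⟨M.fst e, M.snd e, M.no_loop e⟩
  exact Finite.one_lt_card_iff_nontrivial.mpr this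

theorem card_sum_fin : Nat.card (V ⊕ Fin k) = Nat.card V + k := by
  rw [Nat.card_sum]; simp [Nat.card_eq_fintype_card]

theorem hall_of_tree {S : Set {x : {e' : E // e' ≠ e} ⊕ Fin (k+1) // x ≠ Sum.inr i}}
    (hconn : ∀ X Y : V ⊕ Fin k,
      ReflTransGen ((M.subdivide e k).rel (Subtype.val '' S)) X Y)
    (j : Fin (k+1)) (hji : j ≠ i) : Sum.inr j ∈ Subtype.val '' S := by
  by_contra hmiss
  have hmi : (Sum.inr i : {e' : E // e' ≠ e} ⊕ Fin (k+1)) ∉ Subtype.val '' S := by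
    rintro ⟨x, hx, hxe⟩; exact x.2 hxe
  rcases lt_trichotomy (j : ℕ) (i : ℕ) with h | h | h
  · exact two_missing h hmiss hmi hconn
  · exact hji (Fin.ext h)
  · exact two_missing h hmi hmiss hconn

/-- The old-edge part of a spanning set. -/
def inlPart (S : Set {x : {e' : E // e' ≠ e} ⊕ Fin (k+1) // x ≠ Sum.inr i}) :
    Set {e' : E // e' ≠ e} :=
  {g | Sum.inl g ∈ Subtype.val '' S}

/-- The spanning set associated to a tree of `M − e`. -/
def psetD (i : Fin (k+1)) (T : Set {e' : E // e' ≠ e}) :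
    Set {x : {e' : E // e' ≠ e} ⊕ Fin (k+1) // x ≠ Sum.inr i} :=
  {x | Sum.elim (· ∈ T) (fun _ => True) x.1}

theorem conn_of_del_tree {S : Set {x : {e' : E // e' ≠ e} ⊕ Fin (k+1) // x ≠ Sum.inr i}}
    (h : ∀ X Y, ReflTransGen (((M.subdivide e k).delete (Sum.inr i)).rel S) X Y) :
    ∀ X Y : V ⊕ Fin k, ReflTransGen ((M.subdivide e k).rel (Subtype.val '' S)) X Y := by
  rwa [rel_delete] at h

theorem tree_del_fwd {S : Set {x : {e' : E // e' ≠ e} ⊕ Fin (k+1) // x ≠ Sum.inr i}}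
    (hS : ((M.subdivide e k).delete (Sum.inr i)).IsSpanningTree S) :
    (M.delete e).IsSpanningTree (inlPart S) := by
  obtain ⟨hSconn, hScard⟩ := hS
  rw [connected_iff'] at hSconn
  obtain ⟨-, hSconn⟩ := hSconn
  have hconn' := conn_of_del_tree hSconn
  have hall := fun j hji => hall_of_tree hconn' j hji
  constructor
  · rw [connected_iff']
    refine ⟨⟨M.fst e⟩, ?_⟩
    have hback := subdiv_conn_back (Subtype.val '' S) (Subtype.val '' (inlPart S)) i
      (fun g hg => ⟨g, hg, rfl⟩)
      (fun h => by obtain ⟨x, -, hxe⟩ := h; exact absurd hxe x.2)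
      hconn'
    intro x y
    rw [rel_delete]
    exact hback x y
  · -- cardinality
    have h1 : (Subtype.val '' S).ncard = S.ncard := ncard_val_image S
    have h2 := ncard_sum (Subtype.val '' S)
    have h3 : {j : Fin (k+1) | Sum.inr j ∈ Subtype.val '' S} = {j | j ≠ i} := by
      ext j
      simp only [Set.mem_setOf_eq]
      constructor
      · rintro ⟨x, -, hxe⟩ rfl; exact x.2 hxe
      · exact hall j
    have h4 : {g : {e' : E // e' ≠ e} | Sum.inl g ∈ Subtype.val '' S} = inlPart S := rfl
    rw [h3, h4, ncard_ne_fin] at h2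
    rw [hScard, card_sum_fin] at h1
    have h5 := card_V_ge M e
    omega

theorem tree_del_bwd {T : Set {e' : E // e' ≠ e}}
    (hT : (M.delete e).IsSpanningTree T) :
    ((M.subdivide e k).delete (Sum.inr i)).IsSpanningTree (psetD i T) := by
  obtain ⟨hTconn, hTcard⟩ := hT
  rw [connected_iff'] at hTconn
  obtain ⟨hne, hTconn⟩ := hTconn
  have hmem2 : ∀ j : Fin (k+1), j ≠ i →
      (Sum.inr j : {e' : E // e' ≠ e} ⊕ Fin (k+1)) ∈ Subtype.val '' (psetD i T) := by
    intro j hji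
    exact ⟨⟨Sum.inr j, by simpa using hji⟩, trivial, rfl⟩
  have hmem1 : ∀ g : {e' : E // e' ≠ e}, g ∈ T →
      (Sum.inl g : {e' : E // e' ≠ e} ⊕ Fin (k+1)) ∈ Subtype.val '' (psetD i T) := by
    intro g hg
    exact ⟨⟨Sum.inl g, by simp⟩, hg, rfl⟩
  constructor
  · rw [connected_iff']
    refine ⟨⟨Sum.inl (M.fst e)⟩, ?_⟩
    have hfwd := subdiv_conn_fwd (Subtype.val '' (psetD i T)) (Subtype.val '' T) i
      (fun e' h he' => by
        obtain ⟨g, hg, rfl⟩ := he'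
        have : (⟨g.1, h⟩ : {e' : E // e' ≠ e}) = g := Subtype.ext rfl
        rw [this]
        exact hmem1 g hg)
      (fun j hji => hmem2 j hji)
      (fun h => by obtain ⟨g, -, hge⟩ := h; exact absurd hge g.2)
      (by intro x y; have := hTconn x y; rwa [rel_delete] at this)
    intro X Y
    rw [rel_delete]
    exact hfwd X Y
  · have h1 : (Subtype.val '' (psetD i T)).ncard = (psetD i T).ncard := ncard_val_image _
    have h2 := ncard_sum (Subtype.val '' (psetD i T))
    have h3 : {j : Fin (k+1) | Sum.inr j ∈ Subtype.val '' (psetD i T)} = {j | j ≠ i} := by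
      ext j
      simp only [Set.mem_setOf_eq]
      constructor
      · rintro ⟨x, -, hxe⟩ rfl; exact x.2 hxe
      · exact hmem2 j
    have h4 : {g : {e' : E // e' ≠ e} | Sum.inl g ∈ Subtype.val '' (psetD i T)} = T := by
      ext g
      simp only [Set.mem_setOf_eq]
      constructor
      · rintro ⟨x, hx, hxe⟩
        have : x.1 = Sum.inl g := hxe
        unfold psetD at hx
        rw [Set.mem_setOf_eq, this] at hx
        exact hx
      · exact hmem1 g
    rw [h3, h4, ncard_ne_fin] at h2
    rw [hTcard] at h2
    rw [card_sum_fin, ← h1, h2]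
    have h5 := card_V_ge M e
    omega

theorem claim1 (M : Multigraph V E) (e : E) (k : ℕ) (i : Fin (k+1)) :
    ((M.subdivide e k).delete (Sum.inr i)).tau = (M.delete e).tau := by
  refine Nat.card_congr ?_
  refine
    { toFun := fun S => ⟨inlPart S.1, tree_del_fwd S.2⟩
      invFun := fun T => ⟨psetD i T.1, tree_del_bwd T.2⟩
      left_inv := ?_
      right_inv := ?_ }
  · rintro ⟨S, hS⟩
    obtain ⟨hSconn, -⟩ := hS
    rw [connected_iff'] at hSconn
    have hall := fun j hji => hall_of_tree (conn_of_del_tree hSconn.2) j hji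
    refine Subtype.ext ?_
    ext x
    rcases hx1 : x.1 with g | j
    · show Sum.elim (· ∈ inlPart S) (fun _ => True) x.1 ↔ x ∈ S
      rw [hx1]
      simp only [Sum.elim_inl]
      constructor
      · rintro ⟨x', hx', hxe⟩
        have : x' = x := Subtype.ext (hxe.trans hx1.symm)
        rwa [this] at hx'
      · intro hx
        exact ⟨x, hx, hx1⟩
    · show Sum.elim (· ∈ inlPart S) (fun _ => True) x.1 ↔ x ∈ S
      rw [hx1]
      simp only [Sum.elim_inr]
      constructor
      · intro _
        have hji : j ≠ i := by
          intro h
          exact x.2 (hx1.trans (by rw [h]))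
        obtain ⟨x', hx', hxe⟩ := hall j hji
        have : x' = x := Subtype.ext (hxe.trans hx1.symm)
        rwa [this] at hx'
      · intro _; trivial
  · rintro ⟨T, hT⟩
    refine Subtype.ext ?_
    ext g
    show Sum.inl g ∈ Subtype.val '' (psetD i T) ↔ g ∈ T
    constructor
    · rintro ⟨x, hx, hxe⟩
      have : x.1 = Sum.inl g := hxe
      unfold psetD at hx
      rw [Set.mem_setOf_eq, this] at hx
      exact hx
    · intro hg
      exact ⟨⟨Sum.inl g, by simp⟩, hg, rfl⟩

end Claim1

theorem mem_val_image {γ : Type} {p : γ → Prop} {S : Set {x // p x}} {a : γ} :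
    a ∈ Subtype.val '' S ↔ ∃ h : p a, (⟨a, h⟩ : {x // p x}) ∈ S := by
  constructor
  · rintro ⟨x, hx, rfl⟩; exact ⟨x.2, hx⟩
  · rintro ⟨h, hx⟩; exact ⟨⟨a, h⟩, hx, rfl⟩

section Claim2A

variable {M : Multigraph V E} {e : E} {k : ℕ} {i : Fin (k+1)}

/-- Old edges of the subdivision do not become loops when contracting a path edge,
under a mild condition (automatic unless `k = 0`). -/
theorem inl_cond (g : {e' : E // e' ≠ e})
    (h : k = 0 → M.contractMap e (M.fst g.1) ≠ M.contractMap e (M.snd g.1)) :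
    (M.subdivide e k).contractMap (Sum.inr i) ((M.subdivide e k).fst (Sum.inl g)) ≠
      (M.subdivide e k).contractMap (Sum.inr i) ((M.subdivide e k).snd (Sum.inl g)) := by
  intro hpar
  have hne := (M.subdivide e k).no_loop (Sum.inl g)
  rcases contractMap_eq_analysis _ _ hpar hne with ⟨h1, h2⟩ | ⟨h1, h2⟩
  · rw [sub_fst_inl, sub_snd_inr] at h1
    rw [sub_snd_inl, sub_fst_inr] at h2
    split_ifs at h1 h2 with hik hi0 <;>
      simp only [Sum.inl.injEq, Sum.inr.injEq, Fin.mk.injEq, reduceCtorEq] at h1 h2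
    exact h (by omega) (by rw [h1, h2, M.contractMap_snd, M.contractMap_fst])
  · rw [sub_fst_inl, sub_fst_inr] at h1
    rw [sub_snd_inl, sub_snd_inr] at h2
    split_ifs at h1 h2 with hi0 hik <;>
      simp only [Sum.inl.injEq, Sum.inr.injEq, Fin.mk.injEq, reduceCtorEq] at h1 h2
    exact h (by omega) (by rw [h1, h2, M.contractMap_snd, M.contractMap_fst])

/-- Distinct path edges never become loops when contracting `r i`. -/
theorem path_cond {j : Fin (k+1)} (hji : j ≠ i) :
    (M.subdivide e k).contractMap (Sum.inr i) ((M.subdivide e k).fst (Sum.inr j)) ≠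
      (M.subdivide e k).contractMap (Sum.inr i) ((M.subdivide e k).snd (Sum.inr j)) := by
  intro hpar
  have hji' : (j : ℕ) ≠ (i : ℕ) := fun h => hji (Fin.ext h)
  have hik := i.isLt
  have hjk := j.isLt
  have hne := (M.subdivide e k).no_loop (Sum.inr j)
  rcases contractMap_eq_analysis _ _ hpar hne with ⟨h1, h2⟩ | ⟨h1, h2⟩
  · rw [sub_fst_inr, sub_snd_inr] at h1
    rw [sub_snd_inr, sub_fst_inr] at h2
    split_ifs at h1 h2 <;>
      simp only [Sum.inl.injEq, Sum.inr.injEq, Fin.mk.injEq, reduceCtorEq] at h1 h2 <;>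
      first
        | exact M.no_loop e h1
        | exact M.no_loop e h1.symm
        | exact M.no_loop e h2
        | exact M.no_loop e h2.symm
        | omega
  · rw [sub_fst_inr, sub_fst_inr] at h1
    rw [sub_snd_inr, sub_snd_inr] at h2
    split_ifs at h1 h2 <;>
      simp only [Sum.inl.injEq, Sum.inr.injEq, Fin.mk.injEq, reduceCtorEq] at h1 h2 <;>
      first
        | exact M.no_loop e h1
        | exact M.no_loop e h1.symm
        | exact M.no_loop e h2
        | exact M.no_loop e h2.symm
        | omega

/-- The path edge `r j`, `j ≠ i`, as an edge of the contracted subdivision. -/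
def pedge (i : Fin (k+1)) (j : Fin (k+1)) (hji : j ≠ i) (M : Multigraph V E) (e : E) :
    {x : {e' : E // e' ≠ e} ⊕ Fin (k+1) //
      x ≠ Sum.inr i ∧
      (M.subdivide e k).contractMap (Sum.inr i) ((M.subdivide e k).fst x) ≠
        (M.subdivide e k).contractMap (Sum.inr i) ((M.subdivide e k).snd x)} :=
  ⟨Sum.inr j, ⟨fun h => hji (by injection h), path_cond hji⟩⟩

end Claim2A

section Claim2B

variable [Finite V] [Finite E] {M : Multigraph V E} {e : E} {k : ℕ} {i : Fin (k+1)}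

/-- Edge type of the contraction. -/
abbrev CEdge (M : Multigraph V E) (e : E) : Type :=
  {e' : E // e' ≠ e ∧ M.contractMap e (M.fst e') ≠ M.contractMap e (M.snd e')}

def projC (M : Multigraph V E) (e : E) (c : CEdge M e) : {e' : E // e' ≠ e} := ⟨c.1, c.2.1⟩

theorem projC_inj : Function.Injective (projC M e) := by
  intro c c' h
  have h2 : (M.projC e c).1 = (M.projC e c').1 := congrArg Subtype.val h
  exact Subtype.ext h2

/-- The edge set of the contracted subdivision associated to a tree of `M/e`. -/
def psetA (M : Multigraph V E) (e : E) (k : ℕ) (i : Fin (k+1)) (Tc : Set (CEdge M e)) :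
    Set (CEdge (M.subdivide e k) (Sum.inr i)) :=
  {x | Sum.elim (fun g : {e' : E // e' ≠ e} =>
    ∃ hc, (⟨g.1, ⟨g.2, hc⟩⟩ : CEdge M e) ∈ Tc) (fun _ => True) x.1}

/-- The edge set of the contracted subdivision associated to a missing index and a
tree of `M − e`. -/
def psetB (M : Multigraph V E) (e : E) (k : ℕ) (i : Fin (k+1)) (j₀ : Fin (k+1))
    (T : Set {e' : E // e' ≠ e}) : Set (CEdge (M.subdivide e k) (Sum.inr i)) :=
  {x | Sum.elim (· ∈ T) (fun j => j ≠ j₀) x.1}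

theorem card_W : Nat.card {w : V ⊕ Fin k // w ≠ (M.subdivide e k).snd (Sum.inr i)} =
    Nat.card V + k - 1 := by
  rw [card_ne, card_sum_fin]

theorem W_nonempty :
    Nonempty {w : V ⊕ Fin k // w ≠ (M.subdivide e k).snd (Sum.inr i)} := by
  refine ⟨⟨Sum.inl (M.fst e), ?_⟩⟩
  rw [sub_snd_inr]
  split_ifs with h
  · intro hh
    exact M.no_loop e (by injection hh)
  · exact fun hh => Sum.inl_ne_inr hh

theorem memA_inl {Tc : Set (CEdge M e)} (c : CEdge M e) (hc : c ∈ Tc) :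
    (Sum.inl (⟨c.1, c.2.1⟩ : {e' : E // e' ≠ e}) : {e' : E // e' ≠ e} ⊕ Fin (k+1)) ∈
      Subtype.val '' psetA M e k i Tc := by
  refine ⟨⟨Sum.inl ⟨c.1, c.2.1⟩, ⟨by simp, inl_cond _ (fun _ => c.2.2)⟩⟩, ?_, rfl⟩
  show ∃ hc', (⟨c.1, ⟨c.2.1, hc'⟩⟩ : CEdge M e) ∈ Tc
  exact ⟨c.2.2, hc⟩

theorem memA_inl_iff {Tc : Set (CEdge M e)} (g : {e' : E // e' ≠ e}) :
    (Sum.inl g : {e' : E // e' ≠ e} ⊕ Fin (k+1)) ∈ Subtype.val '' psetA M e k i Tc ↔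
      ∃ hc, (⟨g.1, ⟨g.2, hc⟩⟩ : CEdge M e) ∈ Tc := by
  rw [mem_val_image]
  constructor
  · rintro ⟨h, hx⟩
    exact hx
  · rintro ⟨hc, hmem⟩
    exact ⟨⟨by simp, inl_cond _ (fun _ => hc)⟩, ⟨hc, hmem⟩⟩

theorem memA_inr {Tc : Set (CEdge M e)} (j : Fin (k+1)) (hji : j ≠ i) :
    (Sum.inr j : {e' : E // e' ≠ e} ⊕ Fin (k+1)) ∈ Subtype.val '' psetA M e k i Tc :=
  ⟨pedge i j hji M e, trivial, rfl⟩

theorem inlPartA {Tc : Set (CEdge M e)} :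
    {g : {e' : E // e' ≠ e} | Sum.inl g ∈ Subtype.val '' psetA M e k i Tc} =
      projC M e '' Tc := by
  ext g
  rw [Set.mem_setOf_eq, memA_inl_iff]
  constructor
  · rintro ⟨hc, hmem⟩
    exact ⟨⟨g.1, ⟨g.2, hc⟩⟩, hmem, rfl⟩
  · rintro ⟨c, hc, rfl⟩
    exact ⟨c.2.2, hc⟩

theorem inrPartA {Tc : Set (CEdge M e)} :
    {j : Fin (k+1) | Sum.inr j ∈ Subtype.val '' psetA M e k i Tc} = {j | j ≠ i} := by
  ext j
  simp only [Set.mem_setOf_eq]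
  constructor
  · rintro ⟨x, -, hxe⟩ rfl
    exact x.2.1 hxe
  · exact memA_inr j

theorem tree_con_bwd {Tc : Set (CEdge M e)} (hTc : (M.contract e).IsSpanningTree Tc) :
    ((M.subdivide e k).contract (Sum.inr i)).IsSpanningTree (psetA M e k i Tc) := by
  obtain ⟨hconn, hcard⟩ := hTc
  rw [connected_iff'] at hconn
  have hMconn : ∀ x y : V, ReflTransGen (M.rel (Subtype.val '' Tc ∪ {e})) x y :=
    (contract_conn_iff M e Tc).mp hconn.2
  constructor
  · rw [connected_iff']
    refine ⟨W_nonempty, ?_⟩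
    refine (contract_conn_iff (M.subdivide e k) (Sum.inr i) (psetA M e k i Tc)).mpr ?_
    refine subdiv_conn_fwd _ (Subtype.val '' Tc ∪ {e}) i ?_ ?_ ?_ hMconn
    · rintro e' h (he' | he')
      · rw [mem_val_image] at he'
        obtain ⟨hc, hmem⟩ := he'
        exact Or.inl (memA_inl ⟨e', hc⟩ hmem)
      · exact absurd he' h
    · intro j hji
      exact Or.inl (memA_inr j hji)
    · intro _
      exact Or.inr rfl
  · have h1 : (Subtype.val '' psetA M e k i Tc).ncard = (psetA M e k i Tc).ncard :=
      ncard_val_image _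
    have h2 := ncard_sum (Subtype.val '' psetA M e k i Tc)
    rw [inlPartA, inrPartA, ncard_ne_fin,
      Set.ncard_image_of_injective _ projC_inj] at h2
    have h3 : Nat.card {w : V // w ≠ M.snd e} = Nat.card V - 1 := card_ne _
    have h4 := card_V_ge M e
    rw [card_W, ← h1, h2, hcard, h3]
    omega

theorem k_pos_of_ne {j₀ : Fin (k+1)} (hj₀ : j₀ ≠ i) : 1 ≤ k := by
  by_contra h
  have hk : k = 0 := by omega
  subst hk
  exact hj₀ (Fin.ext (by omega))

theorem memB_inl_iff {j₀ : Fin (k+1)} (hj₀ : j₀ ≠ i) {T : Set {e' : E // e' ≠ e}}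
    (g : {e' : E // e' ≠ e}) :
    (Sum.inl g : {e' : E // e' ≠ e} ⊕ Fin (k+1)) ∈
      Subtype.val '' psetB M e k i j₀ T ↔ g ∈ T := by
  rw [mem_val_image]
  constructor
  · rintro ⟨h, hx⟩
    exact hx
  · intro hg
    have hk := k_pos_of_ne hj₀
    exact ⟨⟨by simp, inl_cond _ (fun h0 => absurd h0 (by omega))⟩, hg⟩

theorem memB_inr_iff {j₀ : Fin (k+1)} {T : Set {e' : E // e' ≠ e}} (j : Fin (k+1)) :
    (Sum.inr j : {e' : E // e' ≠ e} ⊕ Fin (k+1)) ∈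
      Subtype.val '' psetB M e k i j₀ T ↔ j ≠ i ∧ j ≠ j₀ := by
  constructor
  · rintro ⟨x, hx, hxe⟩
    refine ⟨fun h => x.2.1 (hxe.trans (by rw [h])), ?_⟩
    have : x.1 = Sum.inr j := hxe
    unfold psetB at hx
    rw [Set.mem_setOf_eq, this] at hx
    exact hx
  · rintro ⟨hji, hjj⟩
    exact ⟨pedge i j hji M e, hjj, rfl⟩

theorem tree_del_bwd2 {j₀ : Fin (k+1)} (hj₀ : j₀ ≠ i) {T : Set {e' : E // e' ≠ e}}
    (hT : (M.delete e).IsSpanningTree T) :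
    ((M.subdivide e k).contract (Sum.inr i)).IsSpanningTree (psetB M e k i j₀ T) := by
  obtain ⟨hconn, hcard⟩ := hT
  rw [connected_iff'] at hconn
  have hMconn : ∀ x y : V, ReflTransGen (M.rel (Subtype.val '' T)) x y := by
    intro x y
    have := hconn.2 x y
    rwa [rel_delete] at this
  constructor
  · rw [connected_iff']
    refine ⟨W_nonempty, ?_⟩
    refine (contract_conn_iff (M.subdivide e k) (Sum.inr i) (psetB M e k i j₀ T)).mpr ?_
    refine subdiv_conn_fwd _ (Subtype.val '' T) j₀ ?_ ?_ ?_ hMconn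
    · rintro e' h he'
      rw [mem_val_image] at he'
      obtain ⟨hne, hmem⟩ := he'
      exact Or.inl ((memB_inl_iff hj₀ ⟨e', hne⟩).mpr hmem)
    · intro j hjj
      by_cases hji : j = i
      · exact Or.inr (by rw [hji]; rfl)
      · exact Or.inl ((memB_inr_iff j).mpr ⟨hji, hjj⟩)
    · rintro ⟨g, -, hge⟩
      exact absurd hge g.2
  · have h1 : (Subtype.val '' psetB M e k i j₀ T).ncard = (psetB M e k i j₀ T).ncard :=
      ncard_val_image _
    have h2 := ncard_sum (Subtype.val '' psetB M e k i j₀ T)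
    have h3 : {g : {e' : E // e' ≠ e} | Sum.inl g ∈ Subtype.val '' psetB M e k i j₀ T} = T := by
      ext g; exact memB_inl_iff hj₀ g
    have h4 : {j : Fin (k+1) | Sum.inr j ∈ Subtype.val '' psetB M e k i j₀ T} =
        {j | j ≠ i ∧ j ≠ j₀} := by
      ext j; exact memB_inr_iff j
    rw [h3, h4, ncard_ne_fin2 i j₀ hj₀] at h2
    have h5 := card_V_ge M e
    have h6 := k_pos_of_ne hj₀
    rw [card_W, ← h1, h2, hcard]
    omega

end Claim2B

section Claim2C

variable [Finite V] [Finite E] {M : Multigraph V E} {e : E} {k : ℕ} {i : Fin (k+1)}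

/-- Old-edge part of a spanning set of the contracted subdivision. -/
def inlPartC (S : Set (CEdge (M.subdivide e k) (Sum.inr i))) : Set {e' : E // e' ≠ e} :=
  {g | Sum.inl g ∈ Subtype.val '' S}

/-- The contracted-edge set recovered from a spanning set. -/
def tcOf (S : Set (CEdge (M.subdivide e k) (Sum.inr i))) : Set (CEdge M e) :=
  {c | Sum.inl (M.projC e c) ∈ Subtype.val '' S}

theorem conn_big {S : Set (CEdge (M.subdivide e k) (Sum.inr i))}
    (hS : ((M.subdivide e k).contract (Sum.inr i)).IsSpanningTree S) :
    ∀ X Y : V ⊕ Fin k,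
      ReflTransGen ((M.subdivide e k).rel (Subtype.val '' S ∪ {Sum.inr i})) X Y := by
  have h := hS.1
  rw [connected_iff'] at h
  exact (contract_conn_iff (M.subdivide e k) (Sum.inr i) S).mp h.2

theorem miss_unique {S : Set (CEdge (M.subdivide e k) (Sum.inr i))}
    (hS : ((M.subdivide e k).contract (Sum.inr i)).IsSpanningTree S)
    {j₁ j₂ : Fin (k+1)} (h1i : j₁ ≠ i) (h2i : j₂ ≠ i)
    (h1 : Sum.inr j₁ ∉ Subtype.val '' S) (h2 : Sum.inr j₂ ∉ Subtype.val '' S) :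
    j₁ = j₂ := by
  have hconn := conn_big hS
  have hm1 : (Sum.inr j₁ : {e' : E // e' ≠ e} ⊕ Fin (k+1)) ∉
      Subtype.val '' S ∪ {Sum.inr i} := by
    rintro (h | h)
    · exact h1 h
    · exact h1i (by injection h)
  have hm2 : (Sum.inr j₂ : {e' : E // e' ≠ e} ⊕ Fin (k+1)) ∉
      Subtype.val '' S ∪ {Sum.inr i} := by
    rintro (h | h)
    · exact h2 h
    · exact h2i (by injection h)
  rcases lt_trichotomy (j₁ : ℕ) (j₂ : ℕ) with h | h | h
  · exact absurd (two_missing h hm1 hm2 hconn) not_false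
  · exact Fin.ext h
  · exact absurd (two_missing h hm2 hm1 hconn) not_false

theorem conn_IP_union {S : Set (CEdge (M.subdivide e k) (Sum.inr i))}
    (hS : ((M.subdivide e k).contract (Sum.inr i)).IsSpanningTree S) :
    ∀ x y : V, ReflTransGen (M.rel (Subtype.val '' inlPartC S ∪ {e})) x y := by
  refine subdiv_conn_back (Subtype.val '' S ∪ {Sum.inr i})
    (Subtype.val '' inlPartC S ∪ {e}) i ?_ ?_ (conn_big hS)
  · rintro g (hg | hg)
    · exact Or.inl ⟨g, hg, rfl⟩
    · exact absurd hg (by simp)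
  · intro _
    exact Or.inr rfl

theorem ncard_IP_all {S : Set (CEdge (M.subdivide e k) (Sum.inr i))}
    (hS : ((M.subdivide e k).contract (Sum.inr i)).IsSpanningTree S)
    (hall : ∀ j : Fin (k+1), j ≠ i → Sum.inr j ∈ Subtype.val '' S) :
    (inlPartC S).ncard = Nat.card V - 2 := by
  have h1 : (Subtype.val '' S).ncard = S.ncard := ncard_val_image _
  have h2 := ncard_sum (Subtype.val '' S)
  have h3 : {j : Fin (k+1) | Sum.inr j ∈ Subtype.val '' S} = {j | j ≠ i} := by
    ext j
    simp only [Set.mem_setOf_eq]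
    constructor
    · rintro ⟨x, -, hxe⟩ rfl
      exact x.2.1 hxe
    · exact hall j
  have h4 : {g : {e' : E // e' ≠ e} | Sum.inl g ∈ Subtype.val '' S} = inlPartC S := rfl
  rw [h3, h4, ncard_ne_fin] at h2
  have h5 := hS.2
  rw [card_W] at h5
  have h6 := card_V_ge M e
  omega

theorem no_parallel {S : Set (CEdge (M.subdivide e k) (Sum.inr i))}
    (hS : ((M.subdivide e k).contract (Sum.inr i)).IsSpanningTree S)
    (hall : ∀ j : Fin (k+1), j ≠ i → Sum.inr j ∈ Subtype.val '' S)
    (g : {e' : E // e' ≠ e}) (hg : g ∈ inlPartC S) :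
    M.contractMap e (M.fst g.1) ≠ M.contractMap e (M.snd g.1) := by
  intro hpar
  rcases contractMap_eq_analysis _ _ hpar (M.no_loop g.1) with ⟨o1, o2⟩ | ⟨o1, o2⟩ <;>
  · have hconnIP : ∀ x y : V, ReflTransGen (M.rel (Subtype.val '' inlPartC S)) x y := by
      intro x y
      refine rtg_map id ?_ (conn_IP_union hS x y)
      rintro a b ⟨f, hf | hf, hor⟩
      · exact ReflTransGen.single ⟨f, hf, hor⟩
      · rcases hf
        refine ReflTransGen.single ⟨g.1, ⟨g, hg, rfl⟩, ?_⟩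
        rw [o1, o2]
        tauto
    have hlb := card_le_of_conn (Nat.card V) V E M (Subtype.val '' inlPartC S) rfl hconnIP
    rw [ncard_val_image, ncard_IP_all hS hall] at hlb
    have := card_V_ge M e
    omega

theorem tcOf_proj {S : Set (CEdge (M.subdivide e k) (Sum.inr i))}
    (hS : ((M.subdivide e k).contract (Sum.inr i)).IsSpanningTree S)
    (hall : ∀ j : Fin (k+1), j ≠ i → Sum.inr j ∈ Subtype.val '' S) :
    M.projC e '' tcOf S = inlPartC S := by
  ext g
  constructor
  · rintro ⟨c, hc, rfl⟩
    exact hc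
  · intro hg
    exact ⟨⟨g.1, g.2, no_parallel hS hall g hg⟩, hg, rfl⟩

theorem tree_con_fwd {S : Set (CEdge (M.subdivide e k) (Sum.inr i))}
    (hS : ((M.subdivide e k).contract (Sum.inr i)).IsSpanningTree S)
    (hall : ∀ j : Fin (k+1), j ≠ i → Sum.inr j ∈ Subtype.val '' S) :
    (M.contract e).IsSpanningTree (tcOf S) := by
  constructor
  · rw [connected_iff']
    refine ⟨⟨⟨M.fst e, M.no_loop e⟩⟩, ?_⟩
    refine (contract_conn_iff M e (tcOf S)).mpr ?_
    have hsets : Subtype.val '' tcOf S ∪ {e} = Subtype.val '' inlPartC S ∪ {e} := by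
      ext f
      constructor
      · rintro (⟨c, hc, rfl⟩ | hf)
        · exact Or.inl ⟨M.projC e c, hc, rfl⟩
        · exact Or.inr hf
      · rintro (⟨g, hg, rfl⟩ | hf)
        · exact Or.inl ⟨⟨g.1, g.2, no_parallel hS hall g hg⟩, hg, rfl⟩
        · exact Or.inr hf
    rw [hsets]
    exact conn_IP_union hS
  · have h1 : (tcOf S).ncard = (inlPartC S).ncard := by
      rw [← tcOf_proj hS hall, Set.ncard_image_of_injective _ projC_inj]
    rw [h1, ncard_IP_all hS hall, card_ne]
    have := card_V_ge M e
    omega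

theorem psetA_recover {S : Set (CEdge (M.subdivide e k) (Sum.inr i))}
    (hS : ((M.subdivide e k).contract (Sum.inr i)).IsSpanningTree S)
    (hall : ∀ j : Fin (k+1), j ≠ i → Sum.inr j ∈ Subtype.val '' S) :
    psetA M e k i (tcOf S) = S := by
  ext x
  rcases hx1 : x.1 with g | j
  · show Sum.elim _ _ x.1 ↔ x ∈ S
    rw [hx1]
    simp only [Sum.elim_inl]
    constructor
    · rintro ⟨hc, hmem⟩
      obtain ⟨x', hx', hxe⟩ := hmem
      have : x' = x := Subtype.ext (hxe.trans hx1.symm)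
      rwa [this] at hx'
    · intro hx
      have hg : g ∈ inlPartC S := ⟨x, hx, hx1⟩
      exact ⟨no_parallel hS hall g hg, ⟨x, hx, hx1⟩⟩
  · show Sum.elim _ _ x.1 ↔ x ∈ S
    rw [hx1]
    simp only [Sum.elim_inr]
    constructor
    · intro _
      have hji : j ≠ i := fun h => x.2.1 (hx1.trans (by rw [h]))
      obtain ⟨x', hx', hxe⟩ := hall j hji
      have : x' = x := Subtype.ext (hxe.trans hx1.symm)
      rwa [this] at hx'
    · intro _
      trivial

theorem tree_IP_miss {S : Set (CEdge (M.subdivide e k) (Sum.inr i))}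
    (hS : ((M.subdivide e k).contract (Sum.inr i)).IsSpanningTree S)
    {j₀ : Fin (k+1)} (hj₀i : j₀ ≠ i) (hj₀ : Sum.inr j₀ ∉ Subtype.val '' S) :
    (M.delete e).IsSpanningTree (inlPartC S) := by
  constructor
  · rw [connected_iff']
    refine ⟨⟨M.fst e⟩, ?_⟩
    have hback := subdiv_conn_back (Subtype.val '' S ∪ {Sum.inr i})
      (Subtype.val '' inlPartC S) j₀
      (fun g hg => by
        rcases hg with hg | hg
        · exact ⟨g, hg, rfl⟩
        · exact absurd hg (by simp))
      (fun h => by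
        rcases h with h | h
        · exact absurd h hj₀
        · exact absurd (by injection h : j₀ = i) hj₀i)
      (conn_big hS)
    intro x y
    rw [rel_delete]
    exact hback x y
  · have h1 : (Subtype.val '' S).ncard = S.ncard := ncard_val_image _
    have h2 := ncard_sum (Subtype.val '' S)
    have h3 : {j : Fin (k+1) | Sum.inr j ∈ Subtype.val '' S} = {j | j ≠ i ∧ j ≠ j₀} := by
      ext j
      simp only [Set.mem_setOf_eq]
      constructor
      · intro hmem
        have hji : j ≠ i := by
          obtain ⟨x, -, hxe⟩ := hmem
          exact fun h => x.2.1 (hxe.trans (by rw [h]))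
        exact ⟨hji, fun h => hj₀ (h ▸ hmem)⟩
      · rintro ⟨hji, hjj⟩
        by_contra hmem
        exact hjj (miss_unique hS hji hj₀i hmem hj₀)
    have h4 : {g : {e' : E // e' ≠ e} | Sum.inl g ∈ Subtype.val '' S} = inlPartC S := rfl
    rw [h3, h4, ncard_ne_fin2 i j₀ hj₀i] at h2
    have h5 := hS.2
    rw [card_W] at h5
    have h6 := card_V_ge M e
    have h7 := k_pos_of_ne hj₀i
    omega

theorem psetB_recover {S : Set (CEdge (M.subdivide e k) (Sum.inr i))}
    (hS : ((M.subdivide e k).contract (Sum.inr i)).IsSpanningTree S)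
    {j₀ : Fin (k+1)} (hj₀i : j₀ ≠ i) (hj₀ : Sum.inr j₀ ∉ Subtype.val '' S) :
    psetB M e k i j₀ (inlPartC S) = S := by
  ext x
  rcases hx1 : x.1 with g | j
  · show Sum.elim _ _ x.1 ↔ x ∈ S
    rw [hx1]
    simp only [Sum.elim_inl]
    constructor
    · rintro ⟨x', hx', hxe⟩
      have : x' = x := Subtype.ext (hxe.trans hx1.symm)
      rwa [this] at hx'
    · intro hx
      exact ⟨x, hx, hx1⟩
  · show Sum.elim _ _ x.1 ↔ x ∈ S
    rw [hx1]
    simp only [Sum.elim_inr]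
    constructor
    · intro hjj
      have hji : j ≠ i := fun h => x.2.1 (hx1.trans (by rw [h]))
      by_contra hx
      have hmiss : Sum.inr j ∉ Subtype.val '' S := by
        rintro ⟨x', hx', hxe⟩
        have : x' = x := Subtype.ext (hxe.trans hx1.symm)
        exact hx (this ▸ hx')
      exact hjj (miss_unique hS hji hj₀i hmiss hj₀)
    · intro hx hjj
      subst hjj
      exact hj₀ ⟨x, hx, hx1⟩

end Claim2C

section Claim2D

variable [Finite V] [Finite E] {M : Multigraph V E} {e : E} {k : ℕ} {i : Fin (k+1)}

theorem memA_inl_iff' {Tc : Set (CEdge M e)} (c : CEdge M e) :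
    (Sum.inl (M.projC e c) : {e' : E // e' ≠ e} ⊕ Fin (k+1)) ∈
      Subtype.val '' psetA M e k i Tc ↔ c ∈ Tc := by
  rw [memA_inl_iff]
  constructor
  · rintro ⟨hc, hmem⟩
    have h : (⟨(M.projC e c).1, ⟨(M.projC e c).2, hc⟩⟩ : CEdge M e) = c := Subtype.ext rfl
    rwa [h] at hmem
  · intro hc
    exact ⟨c.2.2, hc⟩

theorem claim2 (M : Multigraph V E) (e : E) (k : ℕ) (i : Fin (k+1)) :
    ((M.subdivide e k).contract (Sum.inr i)).tau =
      k * (M.delete e).tau + (M.contract e).tau := by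
  classical
  set Φ : {Tc : Set (CEdge M e) // (M.contract e).IsSpanningTree Tc} ⊕
      ({j : Fin (k+1) // j ≠ i} × {T : Set {e' : E // e' ≠ e} //
        (M.delete e).IsSpanningTree T}) →
      {S : Set (CEdge (M.subdivide e k) (Sum.inr i)) //
        ((M.subdivide e k).contract (Sum.inr i)).IsSpanningTree S} :=
    Sum.elim (fun Tc => ⟨psetA M e k i Tc.1, tree_con_bwd Tc.2⟩)
      (fun p => ⟨psetB M e k i p.1.1 p.2.1, tree_del_bwd2 p.1.2 p.2.2⟩) with hΦ
  have hbij : Function.Bijective Φ := by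
    constructor
    · rintro (Tc | p) (Tc' | p') h
      · have hset : psetA M e k i Tc.1 = psetA M e k i Tc'.1 := congrArg Subtype.val h
        congr 1
        refine Subtype.ext ?_
        ext c
        rw [← memA_inl_iff' (i := i) c, hset, memA_inl_iff' c]
      · exfalso
        have hset : psetA M e k i Tc.1 = psetB M e k i p'.1.1 p'.2.1 :=
          congrArg Subtype.val h
        have hx : pedge i p'.1.1 p'.1.2 M e ∈ psetA M e k i Tc.1 := trivial
        rw [hset] at hx
        exact hx rfl
      · exfalso
        have hset : psetB M e k i p.1.1 p.2.1 = psetA M e k i Tc'.1 :=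
          congrArg Subtype.val h
        have hx : pedge i p.1.1 p.1.2 M e ∈ psetA M e k i Tc'.1 := trivial
        rw [← hset] at hx
        exact hx rfl
      · have hset : psetB M e k i p.1.1 p.2.1 = psetB M e k i p'.1.1 p'.2.1 :=
          congrArg Subtype.val h
        have hj : p.1 = p'.1 := by
          by_contra hne
          have hval : p'.1.1 ≠ p.1.1 := fun hh => hne (Subtype.ext hh.symm)
          have hx : pedge i p'.1.1 p'.1.2 M e ∈ psetB M e k i p.1.1 p.2.1 := hval
          rw [hset] at hx
          exact hx rfl
        have hT : p.2.1 = p'.2.1 := by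
          ext g
          rw [← memB_inl_iff (M := M) (k := k) p.1.2 g, hset, ← hj,
            memB_inl_iff (M := M) (k := k) p.1.2 g]
        congr 1
        exact Prod.ext hj (Subtype.ext hT)
    · rintro ⟨S, hS⟩
      by_cases hall : ∀ j : Fin (k+1), j ≠ i → Sum.inr j ∈ Subtype.val '' S
      · exact ⟨Sum.inl ⟨tcOf S, tree_con_fwd hS hall⟩,
          Subtype.ext (psetA_recover hS hall)⟩
      · push_neg at hall
        obtain ⟨j₀, hj₀i, hj₀⟩ := hall
        exact ⟨Sum.inr ⟨⟨j₀, hj₀i⟩, ⟨inlPartC S, tree_IP_miss hS hj₀i hj₀⟩⟩,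
          Subtype.ext (psetB_recover hS hj₀i hj₀)⟩
  have hcards := Nat.card_eq_of_bijective Φ hbij
  rw [Nat.card_sum, Nat.card_prod] at hcards
  have hfin : Nat.card {j : Fin (k+1) // j ≠ i} = k := by
    rw [card_ne]
    simp [Nat.card_eq_fintype_card]
  rw [hfin] at hcards
  have e1 : ((M.subdivide e k).contract (Sum.inr i)).tau =
      Nat.card {S : Set (CEdge (M.subdivide e k) (Sum.inr i)) //
        ((M.subdivide e k).contract (Sum.inr i)).IsSpanningTree S} := rfl
  have e2 : (M.contract e).tau =
      Nat.card {Tc : Set (CEdge M e) // (M.contract e).IsSpanningTree Tc} := rfl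
  have e3 : (M.delete e).tau =
      Nat.card {T : Set {e' : E // e' ≠ e} // (M.delete e).IsSpanningTree T} := rfl
  rw [e1, e2, e3]
  omega

end Claim2D

end Multigraph

/-- Subdividing the marked edge: if `(G', e')` is obtained from the marked connected
graph `(G, e)` by replacing `e` with a path of length `k+1` and marking one of the new
edges `e'`, then `τ(G'−e') = τ(G−e)` and `τ(G'/e') = k·τ(G−e) + τ(G/e)`. -/
theorem tau_subdivide {V E : Type} [Fintype V] [Fintype E] (M : Multigraph V E) (e : E)
    (hconn : (M.simpleOf Set.univ).Connected)
    (hdel : 0 < (M.delete e).tau) (hcon : 0 < (M.contract e).tau)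
    (k : ℕ) (i : Fin (k + 1)) :
    ((M.subdivide e k).delete (.inr i)).tau = (M.delete e).tau ∧
    ((M.subdivide e k).contract (.inr i)).tau =
      k * (M.delete e).tau + (M.contract e).tau := by
  exact ⟨Multigraph.claim1 M e k i, Multigraph.claim2 M e k i⟩
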